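/- Let k be a number field of degree n = [k:ℚ], let I be a nonzero fractional ideal of k, and let x = (x_v)_v be real weights indexed by the infinite places of k satisfying ∏_v e^{x_v} = N(I). Then for a nonzero f ∈ I one has Q_x(f) = n if and only if I is the principal fractional ideal generated by f and |f|_v^{e_v} = e^{x_v} for every infinite place v, where e_v = 1 if v is real and e_v = 2 if v is complex. -/

import Mathlib

open NumberField Finset
open scoped Classical

variable (k : Type*) [Field k] [NumberField k]

/-- `Q_x(f) = ∑_{v real} |f|_v² e^{-2 x_v} + 2 ∑_{v complex} |f|_v² e^{-x_v}`. -/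
noncomputable def arakelovQ (x : InfinitePlace k → ℝ) (f : k) : ℝ :=
  ∑ v : InfinitePlace k,
    if v.IsReal then (v f) ^ 2 * Real.exp (-2 * x v)
    else 2 * (v f) ^ 2 * Real.exp (-(x v))

theorem arakelovQ_eq_degree_iff (I : FractionalIdeal (nonZeroDivisors (𝓞 k)) k)
    (hI : I ≠ 0) (x : InfinitePlace k → ℝ)
    (hx : ∏ v : InfinitePlace k, Real.exp (x v) = (FractionalIdeal.absNorm I : ℝ))
    (f : k) (hfI : f ∈ I) (hf : f ≠ 0) :
    arakelovQ k x f = (Module.finrank ℚ k : ℝ) ↔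
      (I = FractionalIdeal.spanSingleton (nonZeroDivisors (𝓞 k)) f ∧
       ∀ v : InfinitePlace k, (v f) ^ (if v.IsReal then 1 else 2) = Real.exp (x v)) := by
  classical
  have hvf : ∀ v : InfinitePlace k, 0 < v f := fun v => InfinitePlace.pos_iff.mpr hf
  -- the ideal-theoretic part
  have hsp : FractionalIdeal.spanSingleton (nonZeroDivisors (𝓞 k)) f ≤ I :=
    FractionalIdeal.spanSingleton_le_iff_mem.mpr hfI
  have hspn : FractionalIdeal.spanSingleton (nonZeroDivisors (𝓞 k)) f ≠ 0 :=
    FractionalIdeal.spanSingleton_ne_zero_iff.mpr hf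
  set J := FractionalIdeal.spanSingleton (nonZeroDivisors (𝓞 k)) f * I⁻¹ with hJdef
  have hJI : J * I = FractionalIdeal.spanSingleton (nonZeroDivisors (𝓞 k)) f := by
    rw [hJdef, mul_assoc, mul_comm I⁻¹ I, mul_inv_cancel₀ hI, mul_one]
  have hJ1 : J ≤ 1 := by
    calc J ≤ I * I⁻¹ := mul_left_mono (a := I⁻¹) hsp
    _ = 1 := mul_inv_cancel₀ hI
  obtain ⟨J₀, hJ₀⟩ := FractionalIdeal.le_one_iff_exists_coeIdeal.mp hJ1
  have hJne : J ≠ 0 := by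
    intro h
    rw [h, zero_mul] at hJI
    exact hspn hJI.symm
  have hJ₀ne : Ideal.absNorm J₀ ≠ 0 := by
    rw [Ne, Ideal.absNorm_eq_zero_iff]
    intro h
    apply hJne
    rw [← hJ₀, h]
    simp
  have hJ₀one : 1 ≤ Ideal.absNorm J₀ := Nat.one_le_iff_ne_zero.mpr hJ₀ne
  set N : ℝ := (Ideal.absNorm J₀ : ℝ) with hNdef
  have hN1 : 1 ≤ N := by rw [hNdef]; exact_mod_cast hJ₀one
  have hN0 : 0 < N := lt_of_lt_of_le one_pos hN1
  have habsJ : FractionalIdeal.absNorm J = (Ideal.absNorm J₀ : ℚ) := by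
    rw [← hJ₀, FractionalIdeal.coeIdeal_absNorm]
  have hNI0 : (0 : ℝ) < (FractionalIdeal.absNorm I : ℝ) := by
    have := FractionalIdeal.absNorm_nonneg I
    rcases lt_or_eq_of_le this with h | h
    · exact_mod_cast h
    · exact absurd (FractionalIdeal.absNorm_eq_zero_iff.mp h.symm) hI
  have hnormf : ((FractionalIdeal.absNorm
      (FractionalIdeal.spanSingleton (nonZeroDivisors (𝓞 k)) f) : ℚ) : ℝ)
      = N * (FractionalIdeal.absNorm I : ℝ) := by
    rw [← hJI, map_mul, habsJ]
    push_cast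
    ring
  -- iff between J = 1 and I = span f
  have hJ_iff : J = 1 ↔ I = FractionalIdeal.spanSingleton (nonZeroDivisors (𝓞 k)) f := by
    constructor
    · intro h
      rw [← hJI, h, one_mul]
    · intro h
      rw [hJdef, h, ← mul_inv_cancel₀ hspn]
  -- analytic preliminaries
  set t : InfinitePlace k → ℝ :=
    fun v => 2 * Real.log (v f) - (if v.IsReal then 2 * x v else x v) with ht
  have hexp2log : ∀ v : InfinitePlace k, Real.exp (2 * Real.log (v f)) = (v f) ^ 2 := by
    intro v
    rw [show (2 : ℝ) * Real.log (v f) = Real.log ((v f) ^ 2) by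
      rw [Real.log_pow]; push_cast; ring, Real.exp_log (pow_pos (hvf v) 2)]
  have hQ : arakelovQ k x f = ∑ v : InfinitePlace k, (v.mult : ℝ) * Real.exp (t v) := by
    unfold arakelovQ
    refine Finset.sum_congr rfl fun v _ => ?_
    rw [ht]
    by_cases hv : v.IsReal
    · simp only [hv, if_true, InfinitePlace.mult, Nat.cast_one, one_mul]
      rw [sub_eq_add_neg, Real.exp_add, hexp2log]
      rw [show (-2 : ℝ) * x v = -(2 * x v) by ring]
    · simp only [hv, if_false, InfinitePlace.mult, Nat.cast_ofNat]
      rw [sub_eq_add_neg, Real.exp_add, hexp2log]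
      ring
  have hsum_mult : ∑ v : InfinitePlace k, (v.mult : ℝ) = (Module.finrank ℚ k : ℝ) := by
    rw [← Nat.cast_sum]
    exact_mod_cast congrArg (Nat.cast : ℕ → ℝ) (InfinitePlace.sum_mult_eq (K := k))
  have hsum_x : ∑ v : InfinitePlace k, x v = Real.log (FractionalIdeal.absNorm I : ℝ) := by
    rw [← hx, Real.log_prod (fun v _ => (Real.exp_pos _).ne')]
    simp [Real.log_exp]
  have hsum_log : ∑ v : InfinitePlace k, (v.mult : ℝ) * Real.log (v f)
      = Real.log (N * (FractionalIdeal.absNorm I : ℝ)) := by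
    rw [← hnormf]
    have := InfinitePlace.prod_eq_abs_norm f
    have h2 : Real.log (∏ v : InfinitePlace k, (v f) ^ v.mult)
        = ∑ v : InfinitePlace k, (v.mult : ℝ) * Real.log (v f) := by
      rw [Real.log_prod (fun v _ => pow_ne_zero _ (hvf v).ne')]
      exact Finset.sum_congr rfl fun v _ => by rw [Real.log_pow]
    rw [← h2, this]
    congr 1
    simp [FractionalIdeal.absNorm_span_singleton]
  have hsum_t : ∑ v : InfinitePlace k, (v.mult : ℝ) * t v = 2 * Real.log N := by
    have : ∀ v : InfinitePlace k, (v.mult : ℝ) * t v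
        = 2 * ((v.mult : ℝ) * Real.log (v f)) - 2 * x v := by
      intro v
      rw [ht]
      by_cases hv : v.IsReal <;> simp [InfinitePlace.mult, hv] <;> try ring
    rw [Finset.sum_congr rfl fun v _ => this v, Finset.sum_sub_distrib, ← Finset.mul_sum,
      ← Finset.mul_sum, hsum_log, hsum_x, Real.log_mul hN0.ne' hNI0.ne']
    ring
  constructor
  · -- forward direction
    intro hQn
    have hkey : ∑ v : InfinitePlace k, (v.mult : ℝ) * (Real.exp (t v) - 1 - t v)
        = -(2 * Real.log N) := by
      have : ∀ v : InfinitePlace k, (v.mult : ℝ) * (Real.exp (t v) - 1 - t v)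
          = (v.mult : ℝ) * Real.exp (t v) - (v.mult : ℝ) - (v.mult : ℝ) * t v := by
        intro v; ring
      rw [Finset.sum_congr rfl fun v _ => this v, Finset.sum_sub_distrib,
        Finset.sum_sub_distrib, hsum_t, hsum_mult, ← hQ, hQn]
      ring
    have hterm_nonneg : ∀ v ∈ Finset.univ (α := InfinitePlace k),
        0 ≤ (v.mult : ℝ) * (Real.exp (t v) - 1 - t v) := by
      intro v _
      have h1 : t v + 1 ≤ Real.exp (t v) := Real.add_one_le_exp _
      have h2 : (0 : ℝ) ≤ (v.mult : ℝ) := Nat.cast_nonneg _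
      nlinarith
    have hlogN0 : Real.log N = 0 := by
      have hge : 0 ≤ -(2 * Real.log N) := hkey ▸ Finset.sum_nonneg hterm_nonneg
      have hle : 0 ≤ Real.log N := Real.log_nonneg hN1
      linarith
    have hsum0 : ∑ v : InfinitePlace k, (v.mult : ℝ) * (Real.exp (t v) - 1 - t v) = 0 := by
      rw [hkey, hlogN0]; ring
    have ht0 : ∀ v : InfinitePlace k, t v = 0 := by
      intro v
      have := (Finset.sum_eq_zero_iff_of_nonneg hterm_nonneg).mp hsum0 v (Finset.mem_univ v)
      have hm : (0 : ℝ) < (v.mult : ℝ) := by exact_mod_cast InfinitePlace.mult_pos (w := v)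
      have heq : Real.exp (t v) - 1 - t v = 0 := by
        rcases mul_eq_zero.mp this with h | h
        · exact absurd h hm.ne'
        · exact h
      by_contra hne
      have := Real.add_one_lt_exp hne
      linarith
    have hN' : N = 1 := by
      have := Real.exp_log hN0
      rw [hlogN0, Real.exp_zero] at this
      linarith
    have hJone : J = 1 := by
      have : Ideal.absNorm J₀ = 1 := by rw [hNdef] at hN'; exact_mod_cast hN'
      rw [← hJ₀, Ideal.absNorm_eq_one_iff.mp this]
      simp
    refine ⟨(hJ_iff.mp hJone), fun v => ?_⟩
    have := ht0 v
    rw [ht] at this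
    by_cases hv : v.IsReal
    · simp only [hv, if_true] at this ⊢
      rw [pow_one, ← Real.exp_log (hvf v)]
      congr 1
      linarith
    · simp only [hv, if_false] at this ⊢
      rw [← hexp2log v]
      congr 1
      linarith
  · -- backward direction
    rintro ⟨-, hvals⟩
    have ht0 : ∀ v : InfinitePlace k, t v = 0 := by
      intro v
      have := hvals v
      show 2 * Real.log (v f) - (if v.IsReal then 2 * x v else x v) = 0
      by_cases hv : v.IsReal
      · simp only [hv, if_true, pow_one] at this
        rw [if_pos hv, this, Real.log_exp]
        ring
      · simp only [hv, if_false] at this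
        rw [if_neg hv, show (2 : ℝ) * Real.log (v f) = Real.log ((v f) ^ 2) by
          rw [Real.log_pow]; push_cast; ring, this, Real.log_exp]
        ring
    rw [hQ, Finset.sum_congr rfl fun v _ => by rw [ht0 v, Real.exp_zero, mul_one], hsum_mult]
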